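/- Let t > 0, λ ∈ ℝ, and let (ξ_N) be eigenvalues with orthonormal eigenfunctions (χ_N) of H = L + Q (Q bounded by M in operator norm, H with compact resolvent so eigenfunctions form an orthonormal basis). Let v be a unit eigenvector of L with Lv = λv, and suppose the number of N with ξ_N ∈ [λ - t/2, λ + t/2] is at most K, and ‖Qv‖²·(2/t)² ≤ 1/2. Then there exists N with |ξ_N - λ| ≤ t/2 and |⟨χ_N, v⟩|² ≥ 1/(2K). -/

import Mathlib

theorem stmt_19 {E : Type*} [NormedAddCommGroup E] [InnerProductSpace ℝ E] [CompleteSpace E]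
    (H L Q : E →ₗ[ℝ] E) (hHLQ : H = L + Q)
    (hLsym : ∀ u v : E, (inner ℝ (L u) v : ℝ) = inner ℝ u (L v))
    (hQsym : ∀ u v : E, (inner ℝ (Q u) v : ℝ) = inner ℝ u (Q v))
    (b : HilbertBasis ℕ ℝ E) (ξ : ℕ → ℝ) (hH : ∀ N, H (b N) = ξ N • b N)
    (v : E) (lam : ℝ) (hv : ‖v‖ = 1) (hLv : L v = lam • v)
    (t : ℝ) (ht : 0 < t) (K : ℕ) (hK : 1 ≤ K)
    (hfin : {N : ℕ | |ξ N - lam| ≤ t / 2}.Finite)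
    (hcard : {N : ℕ | |ξ N - lam| ≤ t / 2}.ncard ≤ K)
    (hQv : ‖Q v‖ ^ 2 * (2 / t) ^ 2 ≤ 1 / 2) :
    ∃ N : ℕ, |ξ N - lam| ≤ t / 2 ∧ 1 / (2 * K) ≤ (inner ℝ (b N) v : ℝ) ^ 2 := by
  set S : Set ℕ := {N : ℕ | |ξ N - lam| ≤ t / 2} with hS
  set g : ℕ → ℝ := fun N => (inner ℝ (b N) v : ℝ) ^ 2 with hg
  set h : ℕ → ℝ := fun N => (inner ℝ (b N) (Q v) : ℝ) ^ 2 with hh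
  -- key identity
  have hkey : ∀ N, (inner ℝ (b N) (Q v) : ℝ) = (ξ N - lam) * inner ℝ (b N) v := by
    intro N
    have h1 : (inner ℝ (H (b N)) v : ℝ) = ξ N * inner ℝ (b N) v := by
      rw [hH]; exact real_inner_smul_left _ _ _
    have h2 : (inner ℝ (L (b N)) v : ℝ) = lam * inner ℝ (b N) v := by
      rw [hLsym, hLv]; exact real_inner_smul_right _ _ _
    have h3 : (inner ℝ (H (b N)) v : ℝ) = inner ℝ (L (b N)) v + inner ℝ (Q (b N)) v := by
      rw [hHLQ]; rw [LinearMap.add_apply, inner_add_left]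
    rw [← hQsym]
    linarith
  -- summability and Parseval for g
  have hsum_g : Summable g := by
    have := b.summable_inner_mul_inner v v
    refine this.congr fun N => ?_
    simp [hg, real_inner_comm (b N) v, sq]
  have htsum_g : ∑' N, g N = 1 := by
    have := b.tsum_inner_mul_inner v v
    have h2 : ∑' N, g N = (inner ℝ v v : ℝ) := by
      rw [← this]; exact tsum_congr fun N => by simp [hg, real_inner_comm (b N) v, sq]
    rw [h2, real_inner_self_eq_norm_sq, hv]; norm_num
  have hsum_h : Summable h := by
    have := b.summable_inner_mul_inner (Q v) (Q v)
    refine this.congr fun N => ?_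
    simp [hh, real_inner_comm (b N) (Q v), sq]
  have htsum_h : ∑' N, h N = ‖Q v‖ ^ 2 := by
    have := b.tsum_inner_mul_inner (Q v) (Q v)
    have h2 : ∑' N, h N = (inner ℝ (Q v) (Q v) : ℝ) := by
      rw [← this]; exact tsum_congr fun N => by simp [hh, real_inner_comm (b N) (Q v), sq]
    rw [h2, real_inner_self_eq_norm_sq]
  -- bound g on the complement of S
  have hbound : ∀ N : ℕ, N ∉ S → g N ≤ (2 / t) ^ 2 * h N := by
    intro N hN
    have hfar : t / 2 < |ξ N - lam| := by
      simpa [hS] using hN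
    have ht2 : (0:ℝ) < t / 2 := by linarith
    have hsq : (t / 2) ^ 2 < (ξ N - lam) ^ 2 := by
      rw [← sq_abs (ξ N - lam)]
      exact pow_lt_pow_left₀ hfar (le_of_lt ht2) (by norm_num)
    have hhg : h N = (ξ N - lam) ^ 2 * g N := by
      simp only [hh, hg, hkey N]; ring
    have hgnn : 0 ≤ g N := sq_nonneg _
    have : (t / 2) ^ 2 * g N ≤ h N := by
      rw [hhg]; exact mul_le_mul_of_nonneg_right (le_of_lt hsq) hgnn
    have h6 : (2 / t) ^ 2 * (t / 2) ^ 2 = 1 := by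
      field_simp
    nlinarith [mul_le_mul_of_nonneg_left this (by positivity : (0:ℝ) ≤ (2 / t) ^ 2)]
  -- the complement sum is small
  have hcompl_le : ∑' x : ↑Sᶜ, g x ≤ 1 / 2 := by
    have hsg : Summable (fun x : ↑Sᶜ => g x) := hsum_g.subtype _
    have hsh : Summable (fun x : ↑Sᶜ => (2 / t) ^ 2 * h x) :=
      (hsum_h.subtype _).mul_left _
    have h1 : ∑' x : ↑Sᶜ, g x ≤ ∑' x : ↑Sᶜ, (2 / t) ^ 2 * h x :=
      Summable.tsum_le_tsum (fun x => hbound x x.2) hsg hsh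
    have h2 : ∑' x : ↑Sᶜ, (2 / t) ^ 2 * h x = (2 / t) ^ 2 * ∑' x : ↑Sᶜ, h x :=
      tsum_mul_left
    have h3 : ∑' x : ↑Sᶜ, h x ≤ ∑' N, h N := by
      refine Summable.tsum_subtype_le h _ (fun N => sq_nonneg _) hsum_h
    have h4 : (2 / t) ^ 2 * ∑' x : ↑Sᶜ, h x ≤ (2 / t) ^ 2 * ‖Q v‖ ^ 2 := by
      rw [← htsum_h]
      exact mul_le_mul_of_nonneg_left h3 (by positivity)
    have h5 : (2 / t) ^ 2 * ‖Q v‖ ^ 2 ≤ 1 / 2 := by linarith [hQv]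
    linarith
  -- the finite sum over S is at least 1/2
  have hsplit : (∑' x : ↑S, g x) + ∑' x : ↑Sᶜ, g x = ∑' N, g N :=
    Summable.tsum_add_tsum_compl (hsum_g.subtype _) (hsum_g.subtype _)
  have hSsum : (1:ℝ) / 2 ≤ ∑' x : ↑S, g x := by
    rw [htsum_g] at hsplit; linarith
  have hfinset : ∑' x : ↑S, g x = ∑ N ∈ hfin.toFinset, g N := by
    calc ∑' x : ↑S, g x = ∑' x : (↑hfin.toFinset : Set ℕ), g x := by rw [hfin.coe_toFinset]
      _ = ∑ N ∈ hfin.toFinset, g N := Finset.tsum_subtype' hfin.toFinset g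
  -- pigeonhole
  by_contra hcon
  push_neg at hcon
  have hne : hfin.toFinset.Nonempty := by
    rcases Finset.eq_empty_or_nonempty hfin.toFinset with he | hne
    · rw [hfinset, he, Finset.sum_empty] at hSsum; linarith
    · exact hne
  have hlt : ∀ N ∈ hfin.toFinset, g N < 1 / (2 * K) := by
    intro N hN
    exact hcon N (hfin.mem_toFinset.mp hN)
  have hsumlt : ∑ N ∈ hfin.toFinset, g N < hfin.toFinset.card * (1 / (2 * K)) := by
    calc ∑ N ∈ hfin.toFinset, g N < ∑ _N ∈ hfin.toFinset, (1 / (2 * (K:ℝ))) :=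
          Finset.sum_lt_sum_of_nonempty hne hlt
      _ = hfin.toFinset.card * (1 / (2 * K)) := by
          rw [Finset.sum_const, nsmul_eq_mul]
  have hcard' : (hfin.toFinset.card : ℝ) ≤ K := by
    have : S.ncard = hfin.toFinset.card := Set.ncard_eq_toFinset_card S hfin
    rw [← this]
    exact_mod_cast hcard
  have hKpos : (0:ℝ) < 2 * K := by positivity
  have : hfin.toFinset.card * (1 / (2 * (K:ℝ))) ≤ K * (1 / (2 * K)) :=
    mul_le_mul_of_nonneg_right hcard' (by positivity)
  have hfin2 : (K:ℝ) * (1 / (2 * K)) = 1 / 2 := by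
    field_simp
  rw [hfinset] at hSsum
  linarith
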